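/- For a binary quantum state set (M = 2), the proposed upper bound is attained: the maximum of Tr(ρ_0 Π_0) + Tr(ρ_1 Π_1) over all 2-outcome POVMs (Π_0, Π_1) equals Tr X_1 = Tr ρ_0 + Tr((ρ_1 − ρ_0)_+); i.e., there exists a POVM achieving this value and no POVM exceeds it. -/

import Mathlib

open Matrix
open scoped ComplexOrder

/-- Positive part `A₊` of a Hermitian matrix (junk value `0` on non-Hermitian input). -/
noncomputable def matPosPart {n : ℕ} (A : Matrix (Fin n) (Fin n) ℂ) : Matrix (Fin n) (Fin n) ℂ :=
  if hA : A.IsHermitian then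
    (hA.eigenvectorUnitary : Matrix (Fin n) (Fin n) ℂ) *
      Matrix.diagonal (fun i => if 0 < hA.eigenvalues i then (hA.eigenvalues i : ℂ) else 0) *
      star (hA.eigenvectorUnitary : Matrix (Fin n) (Fin n) ℂ)
  else 0

/-- Projection `P₍>₎(A)` onto the span of eigenvectors of positive eigenvalues. -/
noncomputable def matProjPos {n : ℕ} (A : Matrix (Fin n) (Fin n) ℂ) : Matrix (Fin n) (Fin n) ℂ :=
  if hA : A.IsHermitian then
    (hA.eigenvectorUnitary : Matrix (Fin n) (Fin n) ℂ) *
      Matrix.diagonal (fun i => if 0 < hA.eigenvalues i then (1 : ℂ) else 0) *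
      star (hA.eigenvectorUnitary : Matrix (Fin n) (Fin n) ℂ)
  else 0

/-- Projection `P₍≥₎(A)` onto the span of eigenvectors of nonnegative eigenvalues. -/
noncomputable def matProjNonneg {n : ℕ} (A : Matrix (Fin n) (Fin n) ℂ) : Matrix (Fin n) (Fin n) ℂ :=
  if hA : A.IsHermitian then
    (hA.eigenvectorUnitary : Matrix (Fin n) (Fin n) ℂ) *
      Matrix.diagonal (fun i => if 0 ≤ hA.eigenvalues i then (1 : ℂ) else 0) *
      star (hA.eigenvectorUnitary : Matrix (Fin n) (Fin n) ℂ)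
  else 0


lemma psd_diag_nonneg {n : ℕ} {M : Matrix (Fin n) (Fin n) ℂ} (hM : M.PosSemidef) (i : Fin n) :
    0 ≤ M i i := by
  have := hM.dotProduct_mulVec_nonneg (Pi.single i 1)
  simpa [dotProduct, mulVec, Pi.single_apply, Finset.sum_ite_eq, Finset.sum_ite_eq'] using this

lemma psd_trace_re_nonneg {n : ℕ} {M : Matrix (Fin n) (Fin n) ℂ} (hM : M.PosSemidef) :
    0 ≤ M.trace.re := by
  rw [Matrix.trace, Complex.re_sum]
  exact Finset.sum_nonneg fun i _ => (Complex.le_def.mp (psd_diag_nonneg hM i)).1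

set_option maxHeartbeats 1000000 in
open scoped MatrixOrder in
lemma trace_mul_psd_re_nonneg {n : ℕ} {A B : Matrix (Fin n) (Fin n) ℂ}
    (hA : A.PosSemidef) (hB : B.PosSemidef) : 0 ≤ (A * B).trace.re := by
  have hA0 : 0 ≤ A := Matrix.nonneg_iff_posSemidef.mpr hA
  have h1 : A * B = CFC.sqrt A * (CFC.sqrt A * B) := by
    rw [← mul_assoc, CFC.sqrt_mul_sqrt_self A hA0]
  rw [h1, Matrix.trace_mul_comm, mul_assoc]
  have h2 : (CFC.sqrt A * B * CFC.sqrt A).PosSemidef := by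
    have := hB.conjTranspose_mul_mul_same (CFC.sqrt A)
    rwa [(Matrix.nonneg_iff_posSemidef.mp (CFC.sqrt_nonneg A)).1] at this
  exact psd_trace_re_nonneg (by rw [← mul_assoc]; exact h2)

variable {n : ℕ} {A : Matrix (Fin n) (Fin n) ℂ}

lemma udu_psd (hA : A.IsHermitian) (d : Fin n → ℂ) (hd : ∀ i, 0 ≤ d i) :
    ((hA.eigenvectorUnitary : Matrix (Fin n) (Fin n) ℂ) * diagonal d *
      star (hA.eigenvectorUnitary : Matrix (Fin n) (Fin n) ℂ)).PosSemidef := by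
  have h := (posSemidef_diagonal_iff.mpr hd).mul_mul_conjTranspose_same
    (hA.eigenvectorUnitary : Matrix (Fin n) (Fin n) ℂ)
  simpa [Matrix.star_eq_conjTranspose] using h

lemma udu_trace (hA : A.IsHermitian) (d : Fin n → ℂ) :
    ((hA.eigenvectorUnitary : Matrix (Fin n) (Fin n) ℂ) * diagonal d *
      star (hA.eigenvectorUnitary : Matrix (Fin n) (Fin n) ℂ)).trace = ∑ i, d i := by
  rw [Matrix.trace_mul_cycle,
    (Matrix.mem_unitaryGroup_iff').mp hA.eigenvectorUnitary.2, one_mul, trace_diagonal]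

lemma udu_mul (hA : A.IsHermitian) (d e : Fin n → ℂ) :
    ((hA.eigenvectorUnitary : Matrix (Fin n) (Fin n) ℂ) * diagonal d *
      star (hA.eigenvectorUnitary : Matrix (Fin n) (Fin n) ℂ)) *
    ((hA.eigenvectorUnitary : Matrix (Fin n) (Fin n) ℂ) * diagonal e *
      star (hA.eigenvectorUnitary : Matrix (Fin n) (Fin n) ℂ)) =
    (hA.eigenvectorUnitary : Matrix (Fin n) (Fin n) ℂ) * diagonal (fun i => d i * e i) *
      star (hA.eigenvectorUnitary : Matrix (Fin n) (Fin n) ℂ) := by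
  have h1 : star (hA.eigenvectorUnitary : Matrix (Fin n) (Fin n) ℂ) *
      (hA.eigenvectorUnitary : Matrix (Fin n) (Fin n) ℂ) = 1 :=
    (Matrix.mem_unitaryGroup_iff').mp hA.eigenvectorUnitary.2
  calc _ = (hA.eigenvectorUnitary : Matrix (Fin n) (Fin n) ℂ) * diagonal d *
      (star (hA.eigenvectorUnitary : Matrix (Fin n) (Fin n) ℂ) *
      (hA.eigenvectorUnitary : Matrix (Fin n) (Fin n) ℂ)) * (diagonal e *
      star (hA.eigenvectorUnitary : Matrix (Fin n) (Fin n) ℂ)) := by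
        simp only [mul_assoc]
    _ = (hA.eigenvectorUnitary : Matrix (Fin n) (Fin n) ℂ) * (diagonal d * diagonal e) *
      star (hA.eigenvectorUnitary : Matrix (Fin n) (Fin n) ℂ) := by
        rw [h1, mul_one]; simp only [mul_assoc]
    _ = _ := by rw [diagonal_mul_diagonal]

lemma udu_one (hA : A.IsHermitian) :
    (hA.eigenvectorUnitary : Matrix (Fin n) (Fin n) ℂ) * diagonal (fun _ => (1:ℂ)) *
      star (hA.eigenvectorUnitary : Matrix (Fin n) (Fin n) ℂ) = 1 := by
  rw [diagonal_one, mul_one, (Matrix.mem_unitaryGroup_iff).mp hA.eigenvectorUnitary.2]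

lemma udu_sub (hA : A.IsHermitian) (d e : Fin n → ℂ) :
    ((hA.eigenvectorUnitary : Matrix (Fin n) (Fin n) ℂ) * diagonal d *
      star (hA.eigenvectorUnitary : Matrix (Fin n) (Fin n) ℂ)) -
    ((hA.eigenvectorUnitary : Matrix (Fin n) (Fin n) ℂ) * diagonal e *
      star (hA.eigenvectorUnitary : Matrix (Fin n) (Fin n) ℂ)) =
    (hA.eigenvectorUnitary : Matrix (Fin n) (Fin n) ℂ) * diagonal (fun i => d i - e i) *
      star (hA.eigenvectorUnitary : Matrix (Fin n) (Fin n) ℂ) := by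
  rw [← sub_mul, ← mul_sub, ← diagonal_sub]

/-- For a binary quantum state set, the maximum of
`Tr(ρ₀Π₀) + Tr(ρ₁Π₁)` over 2-outcome POVMs equals `Tr ρ₀ + Tr((ρ₁ − ρ₀)₊)`:
it is attained by some POVM and no POVM exceeds it. -/
theorem stmt_3 {n : ℕ} (ρ₀ ρ₁ : Matrix (Fin n) (Fin n) ℂ)
    (h₀ : ρ₀.PosSemidef) (h₁ : ρ₁.PosSemidef)
    (ht₀ : 0 < ρ₀.trace.re) (ht₁ : 0 < ρ₁.trace.re)
    (hsum : ρ₀.trace.re + ρ₁.trace.re = 1) :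
    IsGreatest {x : ℝ | ∃ P₀ P₁ : Matrix (Fin n) (Fin n) ℂ, P₀.PosSemidef ∧ P₁.PosSemidef ∧
        P₀ + P₁ = 1 ∧ x = (ρ₀ * P₀).trace.re + (ρ₁ * P₁).trace.re}
      (ρ₀.trace.re + (matPosPart (ρ₁ - ρ₀)).trace.re) := by
  set Δ : Matrix (Fin n) (Fin n) ℂ := ρ₁ - ρ₀ with hΔdef
  have hΔ : Δ.IsHermitian := h₁.1.sub h₀.1
  set ev : Fin n → ℝ := hΔ.eigenvalues with hev
  set f : Fin n → ℂ := fun i => if 0 < ev i then (ev i : ℂ) else 0 with hf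
  set χ : Fin n → ℂ := fun i => if 0 < ev i then (1:ℂ) else 0 with hχ
  have hposdef : matPosPart Δ = (hΔ.eigenvectorUnitary : Matrix (Fin n) (Fin n) ℂ) *
      diagonal f * star (hΔ.eigenvectorUnitary : Matrix (Fin n) (Fin n) ℂ) := by
    simp only [matPosPart, dif_pos hΔ]
    rfl
  have hprojdef : matProjPos Δ = (hΔ.eigenvectorUnitary : Matrix (Fin n) (Fin n) ℂ) *
      diagonal χ * star (hΔ.eigenvectorUnitary : Matrix (Fin n) (Fin n) ℂ) := by
    simp only [matProjPos, dif_pos hΔ]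
    rfl
  have hspec : Δ = (hΔ.eigenvectorUnitary : Matrix (Fin n) (Fin n) ℂ) *
      diagonal (RCLike.ofReal ∘ ev) * star (hΔ.eigenvectorUnitary : Matrix (Fin n) (Fin n) ℂ) :=
    hΔ.spectral_theorem
  have hfχ : (fun i => (RCLike.ofReal ∘ ev) i * χ i) = f := by
    funext i
    by_cases h : 0 < ev i <;> simp [hf, hχ, h] <;> rfl
  have key : Δ * matProjPos Δ = matPosPart Δ := by
    rw [hposdef, ← hfχ, ← udu_mul hΔ (RCLike.ofReal ∘ ev) χ, ← hspec, ← hprojdef]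
  have hPP : (matPosPart Δ).PosSemidef := by
    rw [hposdef]
    refine udu_psd hΔ f fun i => ?_
    simp only [hf]
    split_ifs with h
    · exact_mod_cast h.le
    · exact le_refl 0
  have hProjP : (matProjPos Δ).PosSemidef := by
    rw [hprojdef]
    refine udu_psd hΔ χ fun i => ?_
    simp only [hχ]
    split_ifs <;> simp
  have hdiffeq : matPosPart Δ - Δ = (hΔ.eigenvectorUnitary : Matrix (Fin n) (Fin n) ℂ) *
      diagonal (fun i => f i - (RCLike.ofReal ∘ ev) i) *
      star (hΔ.eigenvectorUnitary : Matrix (Fin n) (Fin n) ℂ) := by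
    rw [← udu_sub hΔ f (RCLike.ofReal ∘ ev), ← hspec, ← hposdef]
  have hdiff : (matPosPart Δ - Δ).PosSemidef := by
    rw [hdiffeq]
    refine udu_psd hΔ _ fun i => ?_
    simp only [hf, Function.comp_apply]
    split_ifs with h
    · simp
    · have h' : ev i ≤ 0 := not_lt.mp h
      rw [zero_sub]
      exact neg_nonneg.mpr (RCLike.ofReal_nonpos.mpr h')
  have h1sub : 1 - matProjPos Δ = (hΔ.eigenvectorUnitary : Matrix (Fin n) (Fin n) ℂ) *
      diagonal (fun i => 1 - χ i) *
      star (hΔ.eigenvectorUnitary : Matrix (Fin n) (Fin n) ℂ) := by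
    rw [← udu_sub hΔ _ χ, udu_one hΔ, ← hprojdef]
  have hP0 : (1 - matProjPos Δ).PosSemidef := by
    rw [h1sub]
    refine udu_psd hΔ _ fun i => ?_
    simp only [hχ]
    split_ifs <;> simp
  have hvalue : ∀ P₀ P₁ : Matrix (Fin n) (Fin n) ℂ, P₀ + P₁ = 1 →
      (ρ₀ * P₀).trace.re + (ρ₁ * P₁).trace.re = ρ₀.trace.re + (Δ * P₁).trace.re := by
    intro P₀ P₁ hs
    have hP0' : P₀ = 1 - P₁ := eq_sub_of_add_eq hs
    rw [hP0', hΔdef, mul_sub, mul_one, trace_sub, sub_mul, trace_sub]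
    simp only [Complex.sub_re]
    ring
  constructor
  · refine ⟨1 - matProjPos Δ, matProjPos Δ, hP0, hProjP, sub_add_cancel _ _, ?_⟩
    rw [show ρ₀ * (1 - matProjPos Δ) = ρ₀ * (1 - matProjPos Δ) from rfl]
    rw [hvalue _ _ (sub_add_cancel _ _), key]
  · rintro x ⟨P₀, P₁, hp0, hp1, hs, rfl⟩
    rw [hvalue P₀ P₁ hs]
    have e1 := trace_mul_psd_re_nonneg hdiff hp1
    have e2 := trace_mul_psd_re_nonneg hPP hp0
    have decomp : (matPosPart Δ).trace = ((matPosPart Δ) * P₀).trace +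
        ((matPosPart Δ - Δ) * P₁).trace + (Δ * P₁).trace := by
      rw [← trace_add, ← trace_add, sub_mul]
      congr 1
      rw [add_assoc, sub_add_cancel _ _, ← mul_add, hs, mul_one]
    have hre := congrArg Complex.re decomp
    simp only [Complex.add_re] at hre
    linarith
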